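/- Let q = Δ+1 and let Ψ ∈ ℝ^{(qΔ)×(qΔ)} be the matrix indexed by pairs (u,a) with u ∈ [Δ], a ∈ [q], given by Ψ((u,a),(v,b)) = −1/(Δ+1) + 𝟙[u ≠ v ∧ a ≠ b]·(1/Δ) + 𝟙[u = v ∧ a = b]. Then the maximum eigenvalue of Ψ satisfies λ_max(Ψ) ≤ 1 + 1/Δ. -/

import Mathlib

/-- The correlation matrix `Ψ` of the uniform proper `(Δ+1)`-edge-coloring of a star with
`Δ` edges, given by `Ψ((u,a),(v,b)) = −1/(Δ+1) + 𝟙[u≠v ∧ a≠b]/Δ + 𝟙[(u,a)=(v,b)]`, has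
maximum eigenvalue at most `1 + 1/Δ`; equivalently (since `Ψ` is symmetric),
`(1 + 1/Δ)·I − Ψ` is positive semidefinite. -/
theorem statement7 (Δ : ℕ) (hΔ : 1 ≤ Δ) :
    Matrix.PosSemidef
      ((1 + 1 / (Δ : ℝ)) • (1 : Matrix (Fin Δ × Fin (Δ + 1)) (Fin Δ × Fin (Δ + 1)) ℝ)
        - Matrix.of (fun p p' : Fin Δ × Fin (Δ + 1) =>
            -1 / ((Δ : ℝ) + 1) + (if p.1 ≠ p'.1 ∧ p.2 ≠ p'.2 then 1 / (Δ : ℝ) else 0)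
              + (if p = p' then (1 : ℝ) else 0))) := by
  have hD : (0:ℝ) < Δ := by exact_mod_cast hΔ
  set M : Matrix (Fin Δ × Fin (Δ + 1)) (Fin Δ × Fin (Δ + 1)) ℝ :=
    ((1 + 1 / (Δ : ℝ)) • (1 : Matrix (Fin Δ × Fin (Δ + 1)) (Fin Δ × Fin (Δ + 1)) ℝ)
        - Matrix.of (fun p p' : Fin Δ × Fin (Δ + 1) =>
            -1 / ((Δ : ℝ) + 1) + (if p.1 ≠ p'.1 ∧ p.2 ≠ p'.2 then 1 / (Δ : ℝ) else 0)
              + (if p = p' then (1 : ℝ) else 0))) with hM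
  have key : ∀ p p' : Fin Δ × Fin (Δ + 1), M p p' =
      (if p.1 = p'.1 then 1 / (Δ : ℝ) else 0) + (if p.2 = p'.2 then 1 / (Δ : ℝ) else 0)
        - 1 / ((Δ : ℝ) * ((Δ : ℝ) + 1)) := by
    intro p p'
    have hDne : (Δ : ℝ) ≠ 0 := ne_of_gt hD
    have hD1 : ((Δ : ℝ) + 1) ≠ 0 := by positivity
    simp only [hM, Matrix.sub_apply, Matrix.smul_apply, Matrix.one_apply, Matrix.of_apply,
      Prod.ext_iff, smul_eq_mul]
    by_cases h1 : p.1 = p'.1 <;> by_cases h2 : p.2 = p'.2 <;>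
      simp [h1, h2] <;> field_simp <;> ring
  refine Matrix.PosSemidef.of_dotProduct_mulVec_nonneg ?_ ?_
  · ext p p'
    simp only [Matrix.conjTranspose_apply, star_trivial]
    rw [key p p', key p' p]
    simp [eq_comm]
  · intro x
    set s : Fin Δ → ℝ := fun u => ∑ a, x (u, a) with hs
    set t : Fin (Δ + 1) → ℝ := fun a => ∑ u, x (u, a) with ht
    set S : ℝ := ∑ r, x r with hSdef
    have hS : S = ∑ v : Fin Δ, ∑ b : Fin (Δ + 1), x (v, b) := by
      rw [hSdef, Fintype.sum_prod_type]
    have hSs : S = ∑ u, s u := hS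
    have hSt : S = ∑ a, t a := by rw [hS, Finset.sum_comm]
    set c : ℝ := 1 / ((Δ : ℝ) * ((Δ : ℝ) + 1)) with hc
    have hq : ∀ p, (M.mulVec x) p =
        (1 / (Δ : ℝ)) * s p.1 + (1 / (Δ : ℝ)) * t p.2 - c * S := by
      intro p
      simp only [Matrix.mulVec, dotProduct]
      rw [Fintype.sum_prod_type]
      have expand : ∀ v : Fin Δ, ∀ b : Fin (Δ+1), M p (v, b) * x (v, b) =
          (if p.1 = v then (1 / (Δ : ℝ)) * x (v,b) else 0)
          + (if p.2 = b then (1 / (Δ : ℝ)) * x (v,b) else 0)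
          - c * x (v, b) := by
        intro v b
        rw [key p (v, b)]
        by_cases h1 : p.1 = v <;> by_cases h2 : p.2 = b <;> simp [h1, h2, hc] <;> ring
      simp only [expand, Finset.sum_sub_distrib, Finset.sum_add_distrib]
      have e1 : (∑ v : Fin Δ, ∑ b : Fin (Δ+1),
          if p.1 = v then (1 / (Δ:ℝ)) * x (v,b) else 0) = (1 / (Δ:ℝ)) * s p.1 := by
        rw [Finset.sum_eq_single p.1]
        · simp [hs, Finset.mul_sum]
        · intro v _ hv
          simp [Ne.symm hv]
        · simp
      have e2 : (∑ v : Fin Δ, ∑ b : Fin (Δ+1),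
          if p.2 = b then (1 / (Δ:ℝ)) * x (v,b) else 0) = (1 / (Δ:ℝ)) * t p.2 := by
        rw [Finset.sum_comm, Finset.sum_eq_single p.2]
        · simp [ht, Finset.mul_sum]
        · intro b _ hb
          simp [Ne.symm hb]
        · simp
      have e3 : (∑ v : Fin Δ, ∑ b : Fin (Δ+1), c * x (v,b)) = c * S := by
        rw [hS]
        simp [Finset.mul_sum]
      rw [e1, e2, e3]
    have hQ : dotProduct (star x) (M.mulVec x) =
        (1 / (Δ : ℝ)) * (∑ u, (s u) ^ 2) + (1 / (Δ : ℝ)) * (∑ a, (t a) ^ 2) - c * S ^ 2 := by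
      simp only [dotProduct, star_trivial, Pi.star_apply, hq]
      rw [Fintype.sum_prod_type]
      simp only [mul_sub, mul_add, Finset.sum_sub_distrib, Finset.sum_add_distrib]
      have f1 : (∑ v : Fin Δ, ∑ b : Fin (Δ+1), x (v,b) * ((1 / (Δ:ℝ)) * s v))
          = (1 / (Δ : ℝ)) * (∑ u, (s u) ^ 2) := by
        rw [Finset.mul_sum]
        refine Finset.sum_congr rfl fun v _ => ?_
        rw [← Finset.sum_mul]
        rw [hs]
        ring
      have f2 : (∑ v : Fin Δ, ∑ b : Fin (Δ+1), x (v,b) * ((1 / (Δ:ℝ)) * t b))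
          = (1 / (Δ : ℝ)) * (∑ a, (t a) ^ 2) := by
        rw [Finset.sum_comm, Finset.mul_sum]
        refine Finset.sum_congr rfl fun b _ => ?_
        rw [← Finset.sum_mul]
        rw [ht]
        ring
      have f3 : (∑ v : Fin Δ, ∑ b : Fin (Δ+1), x (v,b) * (c * S)) = c * S ^ 2 := by
        have : (∑ v : Fin Δ, ∑ b : Fin (Δ+1), x (v,b) * (c * S))
            = (∑ v : Fin Δ, ∑ b : Fin (Δ+1), x (v,b)) * (c * S) := by
          rw [Finset.sum_mul]
          refine Finset.sum_congr rfl fun v _ => ?_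
          rw [Finset.sum_mul]
        rw [this, ← hS]
        ring
      rw [f1, f2, f3]
    rw [hQ]
    have hcs : S ^ 2 ≤ ((Δ : ℝ) + 1) * ∑ a, t a ^ 2 := by
      rw [hSt]
      have := sq_sum_le_card_mul_sum_sq (s := (Finset.univ : Finset (Fin (Δ+1)))) (f := t)
      simpa using this
    have h1 : c * S ^ 2 ≤ (1 / (Δ : ℝ)) * (∑ a, t a ^ 2) := by
      rw [hc, div_mul_eq_mul_div, div_mul_eq_mul_div, one_mul, one_mul,
        div_le_div_iff₀ (by positivity) hD]
      calc S ^ 2 * (Δ:ℝ) ≤ (((Δ : ℝ) + 1) * ∑ a, t a ^ 2) * (Δ:ℝ) :=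
            mul_le_mul_of_nonneg_right hcs (le_of_lt hD)
        _ = (∑ a, t a ^ 2) * ((Δ:ℝ) * ((Δ:ℝ) + 1)) := by ring
    have h2 : (0:ℝ) ≤ (1 / (Δ : ℝ)) * (∑ u, (s u) ^ 2) := by positivity
    linarith
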